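/- Let f : ℝ → ℝ be nonnegative with √f ∈ H^s(ℝ) for some s > 2, and let g denote the Fourier transform of √f. Then ∫_0^∞ ∫_m^∞ |g(ω + ω')|² ω'³ dω' dω < ∞ for any m > 0. -/

import Mathlib

open MeasureTheory

/-- The shear `(a, u) ↦ (a, u - a)` as a measurable equivalence of `ℝ × ℝ`. -/
noncomputable def shearSub : ℝ × ℝ ≃ᵐ ℝ × ℝ where
  toFun := fun p => (p.1, -p.1 + p.2)
  invFun := fun p => (p.1, p.1 + p.2)
  left_inv := fun p => by simp
  right_inv := fun p => by simp
  measurable_toFun := measurable_fst.prodMk (measurable_fst.neg.add measurable_snd)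
  measurable_invFun := measurable_fst.prodMk (measurable_fst.add measurable_snd)

/-- Pointwise bound: for `c ≥ 0`, `ofReal (c * u³) * ofReal (u - m) ≤ ofReal ((1+u²)^s * c)`. -/
lemma pointwise_bound (s : ℝ) (hs : 2 < s) (m : ℝ) (hm : 0 < m) (u c : ℝ) (hc : 0 ≤ c) :
    ENNReal.ofReal (c * u ^ 3) * ENNReal.ofReal (u - m)
      ≤ ENNReal.ofReal ((1 + u ^ 2) ^ s * c) := by
  rcases le_or_gt u m with hum | hum
  · rw [ENNReal.ofReal_of_nonpos (show u - m ≤ 0 by linarith), mul_zero]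
    exact zero_le
  · have hu : 0 < u := hm.trans hum
    rw [← ENNReal.ofReal_mul (by positivity)]
    apply ENNReal.ofReal_le_ofReal
    have h2s : (1 + u ^ 2) ^ (2:ℝ) ≤ (1 + u ^ 2) ^ s :=
      Real.rpow_le_rpow_of_exponent_le (by nlinarith) hs.le
    have h2 : (1 + u ^ 2) ^ (2:ℝ) = (1 + u ^ 2) ^ (2:ℕ) := by
      rw [← Real.rpow_natCast (1 + u ^ 2) 2]; norm_num
    have h4 : u ^ 4 ≤ (1 + u ^ 2) ^ s :=
      calc u ^ 4 ≤ (1 + u ^ 2) ^ (2:ℕ) := by nlinarith [sq_nonneg u, sq_nonneg (u^2)]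
        _ = (1 + u ^ 2) ^ (2:ℝ) := h2.symm
        _ ≤ (1 + u ^ 2) ^ s := h2s
    nlinarith [mul_le_mul_of_nonneg_left h4 hc, mul_nonneg (mul_nonneg hc (by positivity : (0:ℝ) ≤ u^3)) hm.le]

/-- if `f ≥ 0`, `√f ∈ H^s(ℝ)` for some `s > 2` (expressed via the
weighted L² condition on the Fourier transform `g` of `√f`), then
`∫_0^∞ ∫_m^∞ |g(ω + ω')|² ω'³ dω' dω < ∞` for any `m > 0`. -/
theorem stmt_7 (f : ℝ → ℝ) (hf : ∀ x, 0 ≤ f x) (s : ℝ) (hs : 2 < s)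
    (g : ℝ → ℂ)
    (hg : ∀ ξ, g ξ = ∫ t : ℝ, Complex.exp (-Complex.I * ξ * t) * (Real.sqrt (f t) : ℂ))
    (hSobolev : Integrable (fun ξ : ℝ => (1 + ξ ^ 2) ^ s * ‖g ξ‖ ^ 2) volume)
    (m : ℝ) (hm : 0 < m) :
    IntegrableOn (fun p : ℝ × ℝ => ‖g (p.1 + p.2)‖ ^ 2 * p.2 ^ 3)
      (Set.Ioi (0 : ℝ) ×ˢ Set.Ioi m) volume := by
  -- a.e. measurability of ‖g‖²
  have hφ : AEMeasurable (fun ξ : ℝ => ‖g ξ‖ ^ 2) volume := by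
    have hne : ∀ ξ : ℝ, (1 + ξ ^ 2) ^ s ≠ 0 :=
      fun ξ => ne_of_gt (Real.rpow_pos_of_pos (by positivity) s)
    have hmeas : Measurable (fun ξ : ℝ => ((1 + ξ ^ 2) ^ s)⁻¹) := by
      have : Continuous (fun ξ : ℝ => (1 + ξ ^ 2) ^ s) :=
        Continuous.rpow_const (by continuity) (fun x => Or.inl (by positivity))
      exact this.measurable.inv
    have h1 : AEMeasurable
        (fun ξ : ℝ => ((1 + ξ ^ 2) ^ s * ‖g ξ‖ ^ 2) * ((1 + ξ ^ 2) ^ s)⁻¹) volume :=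
      hSobolev.aemeasurable.mul hmeas.aemeasurable
    refine h1.congr (Filter.Eventually.of_forall fun ξ => ?_)
    show (1 + ξ ^ 2) ^ s * ‖g ξ‖ ^ 2 * ((1 + ξ ^ 2) ^ s)⁻¹ = ‖g ξ‖ ^ 2
    rw [mul_comm ((1 + ξ ^ 2) ^ s), mul_assoc, mul_inv_cancel₀ (hne ξ), mul_one]
  set A : ℝ × ℝ → ℝ := fun p => ‖g (p.1 + p.2)‖ ^ 2 * p.2 ^ 3 with hA_def
  set S := Set.Ioi (0:ℝ) ×ˢ Set.Ioi m with hS_def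
  have hS : MeasurableSet S := measurableSet_Ioi.prod measurableSet_Ioi
  have hqmp : Measure.QuasiMeasurePreserving (fun p : ℝ × ℝ => p.1 + p.2)
      ((volume : Measure ℝ).prod volume) volume :=
    Measure.quasiMeasurePreserving_snd.comp
      (measurePreserving_prod_add volume volume).quasiMeasurePreserving
  have hA : AEMeasurable A ((volume : Measure ℝ).prod volume) :=
    (hφ.comp_quasiMeasurePreserving hqmp).mul (measurable_snd.pow_const 3).aemeasurable
  have key : Integrable (S.indicator A) ((volume : Measure ℝ).prod volume) := by
    constructor
    · exact (hA.indicator hS).aestronglyMeasurable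
    · rw [hasFiniteIntegral_iff_norm]
      -- change of variables (a, u) ↦ (a, u - a)
      have cov : ∫⁻ p : ℝ × ℝ, ENNReal.ofReal ‖S.indicator A p‖ ∂(volume.prod volume)
          = ∫⁻ p : ℝ × ℝ, ENNReal.ofReal ‖S.indicator A (p.1, -p.1 + p.2)‖
              ∂(volume.prod volume) :=
        ((measurePreserving_prod_neg_add volume volume).lintegral_comp_emb
          shearSub.measurableEmbedding _).symm
      rw [cov]
      -- dominating function
      set S' : Set (ℝ × ℝ) := {p | 0 < p.1 ∧ p.1 + m < p.2} with hS'_def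
      have hS' : MeasurableSet S' :=
        (measurableSet_lt measurable_const measurable_fst).inter
          (measurableSet_lt (measurable_fst.add_const m) measurable_snd)
      set H : ℝ × ℝ → ENNReal :=
        S'.indicator (fun p => ENNReal.ofReal (‖g p.2‖ ^ 2 * p.2 ^ 3)) with hH_def
      have hle : ∀ p : ℝ × ℝ, ENNReal.ofReal ‖S.indicator A (p.1, -p.1 + p.2)‖ ≤ H p := by
        rintro ⟨a, u⟩
        by_cases hmem : (a, -a + u) ∈ S
        · obtain ⟨ha, hu⟩ : (0 < a ∧ m < -a + u) := by
            simpa [hS_def, Set.mem_prod] using hmem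
          have hmem' : (a, u) ∈ S' := ⟨ha, by linarith⟩
          rw [Set.indicator_of_mem hmem, hH_def, Set.indicator_of_mem hmem']
          simp only [hA_def]
          apply ENNReal.ofReal_le_ofReal
          have h1 : 0 < -a + u := hm.trans hu
          have h2 : ‖‖g (a + (-a + u))‖ ^ 2 * (-a + u) ^ 3‖
              = ‖g u‖ ^ 2 * (-a + u) ^ 3 := by
            rw [Real.norm_of_nonneg (by positivity)]; ring_nf
          rw [h2]
          have h3 : (-a + u) ^ 3 ≤ u ^ 3 := pow_le_pow_left₀ h1.le (by linarith) 3
          exact mul_le_mul_of_nonneg_left h3 (by positivity)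
        · rw [Set.indicator_of_notMem hmem]
          simp
      refine lt_of_le_of_lt (lintegral_mono hle) ?_
      -- compute/estimate ∫ H via Tonelli
      have hHmeas : AEMeasurable H ((volume : Measure ℝ).prod volume) := by
        refine AEMeasurable.indicator ?_ hS'
        exact (((hφ.comp_quasiMeasurePreserving Measure.quasiMeasurePreserving_snd).mul
          (measurable_snd.pow_const 3).aemeasurable)).ennreal_ofReal
      rw [lintegral_prod_symm _ hHmeas]
      have inner_eq : ∀ u : ℝ, ∫⁻ a : ℝ, H (a, u) ∂volume
          = ENNReal.ofReal (‖g u‖ ^ 2 * u ^ 3) * ENNReal.ofReal (u - m) := by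
        intro u
        have : (fun a : ℝ => H (a, u))
            = (Set.Ioo (0:ℝ) (u - m)).indicator
                (fun _ => ENNReal.ofReal (‖g u‖ ^ 2 * u ^ 3)) := by
          funext a
          by_cases h : a ∈ Set.Ioo (0:ℝ) (u - m)
          · rw [Set.indicator_of_mem h, hH_def,
              Set.indicator_of_mem (by exact ⟨h.1, by have := h.2; dsimp; linarith⟩)]
          · rw [Set.indicator_of_notMem h, hH_def, Set.indicator_of_notMem]
            intro hc
            exact h ⟨hc.1, by have := hc.2; dsimp at this; linarith⟩
        rw [this, lintegral_indicator measurableSet_Ioo, setLIntegral_const,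
          Real.volume_Ioo]
        norm_num
      calc ∫⁻ u : ℝ, ∫⁻ a : ℝ, H (a, u) ∂volume ∂volume
          = ∫⁻ u : ℝ, ENNReal.ofReal (‖g u‖ ^ 2 * u ^ 3) * ENNReal.ofReal (u - m) ∂volume := by
            exact lintegral_congr inner_eq
        _ ≤ ∫⁻ u : ℝ, ENNReal.ofReal ((1 + u ^ 2) ^ s * ‖g u‖ ^ 2) ∂volume :=
            lintegral_mono fun u => pointwise_bound s hs m hm u _ (by positivity)
        _ < ⊤ := by
            have h2 := hSobolev.hasFiniteIntegral
            rw [hasFiniteIntegral_iff_norm] at h2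
            refine lt_of_le_of_lt (lintegral_mono fun u => ?_) h2
            apply ENNReal.ofReal_le_ofReal
            exact le_abs_self _
  rw [integrable_indicator_iff hS] at key
  rwa [Measure.volume_eq_prod]
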